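/- Fix D > 0, α > 2, T > 0, λ > 0, an integer m ≥ 1 and b > 0. Let g be a nonnegative real random variable with g > 0 almost surely and E[g] < ∞. The function G(s) = 2πλ·∫_0^D r · E[ exp(s·g·r^{−α}·1{g·r^{−α} ≥ T}) ] dr is m-times differentiable on (−∞, 0), and its m-th derivative at s = −1/b equals (2/α)·λπ·b^{m − 2/α}·E[ g^{2/α}·Γ(m − 2/α, (g/b)·max{D^{−α}, T/g}) ]. -/

import Mathlib

open MeasureTheory Set Real

/-- Upper incomplete gamma function `Γ(a, x) = ∫_x^∞ t^(a-1) e^(-t) dt`. -/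
noncomputable def uGamma (a x : ℝ) : ℝ := ∫ t in Set.Ioi x, t ^ (a - 1) * Real.exp (-t)

lemma pow_mul_exp_neg_le (k : ℕ) {δ x : ℝ} (hδ : 0 < δ) (hx : 0 ≤ x) :
    x ^ k * Real.exp (-(δ * x)) ≤ k.factorial / δ ^ k := by
  have hfk : (0:ℝ) < (k.factorial : ℝ) := by positivity
  have h1 : (δ * x) ^ k / k.factorial ≤ Real.exp (δ * x) :=
    Real.pow_div_factorial_le_exp _ (mul_nonneg hδ.le hx) k
  rw [div_le_iff₀ hfk] at h1
  rw [le_div_iff₀ (by positivity)]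
  calc x ^ k * Real.exp (-(δ * x)) * δ ^ k
      = (δ * x) ^ k * Real.exp (-(δ * x)) := by rw [mul_pow]; ring
    _ ≤ Real.exp (δ * x) * k.factorial * Real.exp (-(δ * x)) := by
        have := Real.exp_pos (-(δ * x)); gcongr
    _ = (k.factorial : ℝ) := by
        rw [mul_right_comm, ← Real.exp_add]; simp

/-- Change of variables `t = c * r ^ (-α)`. -/
lemma uGamma_eq {a α c R : ℝ} (hα : 0 < α) (hc : 0 < c) (hR : 0 < R) :
    uGamma a (c * R ^ (-α)) =
      α * c ^ a * ∫ r in Ioc (0:ℝ) R, r ^ (-α * a - 1) * Real.exp (-(c * r ^ (-α))) := by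
  set x₀ : ℝ := c * R ^ (-α) with hx₀
  have hx₀pos : 0 < x₀ := by positivity
  set f : ℝ → ℝ := (Ioi x₀).indicator (fun t => t ^ (a - 1) * Real.exp (-t)) with hf
  have step1 : uGamma a x₀ = ∫ t in Ioi (0:ℝ), f t := by
    rw [hf, setIntegral_indicator measurableSet_Ioi, Ioi_inter_Ioi,
      max_eq_right hx₀pos.le]
    rfl
  have step2 : (∫ t in Ioi (0:ℝ), f t) = c * ∫ u in Ioi (0:ℝ), f (c * u) := by
    rw [integral_comp_mul_left_Ioi f 0 hc, mul_zero, smul_eq_mul, ← mul_assoc,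
      mul_inv_cancel₀ hc.ne', one_mul]
  have step3 : (∫ u in Ioi (0:ℝ), f (c * u))
      = ∫ r in Ioi (0:ℝ), (|(-α)| * r ^ ((-α) - 1)) • f (c * r ^ (-α)) :=
    (integral_comp_rpow_Ioi (fun u => f (c * u)) (neg_ne_zero.mpr hα.ne')).symm
  have step4 : (∫ r in Ioi (0:ℝ), (|(-α)| * r ^ ((-α) - 1)) • f (c * r ^ (-α)))
      = ∫ r in Ioi (0:ℝ),
          (Ioo 0 R).indicator
            (fun r => (α * c ^ (a-1)) * (r ^ (-α * a - 1) * Real.exp (-(c * r ^ (-α))))) r := by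
    apply setIntegral_congr_fun measurableSet_Ioi
    intro r hr
    have hrpos : (0:ℝ) < r := hr
    have habs : |(-α)| = α := by rw [abs_neg, abs_of_pos hα]
    have hmem : c * r ^ (-α) ∈ Ioi x₀ ↔ r < R := by
      rw [mem_Ioi, hx₀, mul_lt_mul_iff_right₀ hc]
      rw [rpow_neg hR.le, rpow_neg hrpos.le,
        inv_lt_inv₀ (rpow_pos_of_pos hR _) (rpow_pos_of_pos hrpos _)]
      exact rpow_lt_rpow_iff hrpos.le hR.le hα
    by_cases hcase : r < R
    · have h1 : c * r ^ (-α) ∈ Ioi x₀ := hmem.mpr hcase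
      have h2 : r ∈ Ioo (0:ℝ) R := ⟨hrpos, hcase⟩
      simp only [hf, indicator_of_mem h1, indicator_of_mem h2, smul_eq_mul, habs]
      have hcr : (c * r ^ (-α)) ^ (a - 1) = c ^ (a-1) * r ^ (-α * (a-1)) := by
        rw [mul_rpow hc.le (rpow_nonneg hrpos.le _), ← rpow_mul hrpos.le]
      rw [hcr, show (-α * a - 1) = (-α - 1) + (-α * (a - 1)) by ring, rpow_add hrpos]
      ring
    · have h1 : c * r ^ (-α) ∉ Ioi x₀ := fun h => hcase (hmem.mp h)
      have h2 : r ∉ Ioo (0:ℝ) R := fun h => hcase h.2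
      simp only [hf, indicator_of_notMem h1, indicator_of_notMem h2, smul_zero]
  rw [step1, step2, step3, step4, setIntegral_indicator measurableSet_Ioo,
    Ioi_inter_Ioo, max_self, integral_const_mul,
    ← integral_Ioc_eq_integral_Ioo]
  rw [Real.rpow_sub hc, Real.rpow_one]
  field_simp

lemma rpow_neg_anti {α u v : ℝ} (hα : 0 ≤ α) (hu : 0 < u) (huv : u ≤ v) :
    v ^ (-α) ≤ u ^ (-α) := by
  have hv : 0 < v := hu.trans_le huv
  rw [Real.rpow_neg hu.le, Real.rpow_neg hv.le]
  exact inv_anti₀ (Real.rpow_pos_of_pos hu α) (Real.rpow_le_rpow hu.le huv hα)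

lemma min_rpow_neg {α x y : ℝ} (hα : 0 ≤ α) (hx : 0 < x) (hy : 0 < y) :
    (min x y) ^ (-α) = max (x ^ (-α)) (y ^ (-α)) := by
  rcases le_total x y with h | h
  · rw [min_eq_left h, max_eq_left (rpow_neg_anti hα hx h)]
  · rw [min_eq_right h, max_eq_right (rpow_neg_anti hα hy h)]

lemma inner_integral {D α T b : ℝ} (hD : 0 < D) (hα : 2 < α) (hT : 0 < T) (hb : 0 < b)
    (m : ℕ) (hm : 1 ≤ m) {G : ℝ} (hG : 0 < G) :
    (∫ r in Ioc (0:ℝ) D,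
        r * (G * r ^ (-α) * (if T ≤ G * r ^ (-α) then (1:ℝ) else 0)) ^ m *
          Real.exp ((-1/b) * (G * r ^ (-α) * (if T ≤ G * r ^ (-α) then (1:ℝ) else 0))))
      = (1/α * b ^ ((m:ℝ) - 2/α)) * (G ^ ((2:ℝ)/α) *
          uGamma ((m:ℝ) - 2/α) ((G/b) * max (D ^ (-α)) (T/G))) := by
  have hα0 : (0:ℝ) < α := by linarith
  set a : ℝ := (m:ℝ) - 2/α with ha
  set K : ℝ := (G/T) ^ (α⁻¹) with hKdef
  have hK : 0 < K := Real.rpow_pos_of_pos (by positivity) _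
  set R : ℝ := min D K with hRdef
  have hR : 0 < R := lt_min hD hK
  have hRD : R ≤ D := min_le_left _ _
  have hKα : K ^ α = G / T := by
    rw [hKdef, ← Real.rpow_mul (by positivity), inv_mul_cancel₀ hα0.ne', Real.rpow_one]
  have hKnegα : K ^ (-α) = T / G := by
    rw [hKdef, ← Real.rpow_mul (by positivity),
      show α⁻¹ * (-α) = -1 by field_simp, Real.rpow_neg_one, inv_div]
  have hcond : ∀ r : ℝ, 0 < r → ((T ≤ G * r ^ (-α)) ↔ r ≤ K) := by
    intro r hr
    have hrα : 0 < r ^ α := Real.rpow_pos_of_pos hr _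
    rw [Real.rpow_neg hr.le, ← div_eq_mul_inv, le_div_iff₀ hrα, mul_comm, ← le_div_iff₀ hT,
      ← hKα, Real.rpow_le_rpow_iff hr.le hK.le hα0]
  set h : ℝ → ℝ := fun r => G ^ m * (r ^ (-α * a - 1) * Real.exp (-(G/b * r ^ (-α)))) with hh
  have step1 : (∫ r in Ioc (0:ℝ) D,
        r * (G * r ^ (-α) * (if T ≤ G * r ^ (-α) then (1:ℝ) else 0)) ^ m *
          Real.exp ((-1/b) * (G * r ^ (-α) * (if T ≤ G * r ^ (-α) then (1:ℝ) else 0))))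
      = ∫ r in Ioc (0:ℝ) D, (Ioc (0:ℝ) R).indicator h r := by
    apply setIntegral_congr_fun measurableSet_Ioc
    intro r hr
    have hrpos : 0 < r := hr.1
    by_cases hcase : T ≤ G * r ^ (-α)
    · have hrK : r ≤ K := (hcond r hrpos).mp hcase
      have hmem : r ∈ Ioc (0:ℝ) R := ⟨hrpos, le_min hr.2 hrK⟩
      simp only [if_pos hcase, mul_one, indicator_of_mem hmem, hh]
      have e1 : (G * r ^ (-α)) ^ m = G ^ m * r ^ (-α * (m:ℝ)) := by
        rw [mul_pow, ← Real.rpow_natCast (r ^ (-α)) m, ← Real.rpow_mul hrpos.le]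
      have e2 : (-1/b) * (G * r ^ (-α)) = -(G/b * r ^ (-α)) := by ring
      rw [e1, e2]
      have e3 : -α * a - 1 = 1 + (-α * (m:ℝ)) := by
        rw [ha]; field_simp; ring
      rw [e3, Real.rpow_add hrpos, Real.rpow_one]
      ring
    · have hrK : K < r := lt_of_not_ge fun hc => hcase ((hcond r hrpos).mpr hc)
      have hnmem : r ∉ Ioc (0:ℝ) R := fun hc =>
        absurd (hc.2.trans (min_le_right D K)) (not_le.mpr hrK)
      simp only [if_neg hcase, mul_zero, indicator_of_notMem hnmem, zero_pow
        (Nat.one_le_iff_ne_zero.mp hm), Real.exp_zero, mul_one, zero_mul]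
  rw [step1, setIntegral_indicator measurableSet_Ioc, Ioc_inter_Ioc, sup_idem,
    min_eq_right hRD]
  rw [hh]
  rw [integral_const_mul]
  have huG := uGamma_eq (a := a) hα0 (show (0:ℝ) < G/b by positivity) hR
  have hmax : R ^ (-α) = max (D ^ (-α)) (T/G) := by
    rw [hRdef, min_rpow_neg hα0.le hD hK, hKnegα]
  rw [← hmax, huG]
  have hGa : (0:ℝ) < (G/b) ^ a := Real.rpow_pos_of_pos (by positivity) _
  have e4 : (G:ℝ) ^ m = G ^ ((2:ℝ)/α) * G ^ a := by
    rw [← Real.rpow_natCast G m, show (m:ℝ) = 2/α + a by rw [ha]; ring,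
      Real.rpow_add hG]
  have e5 : (G/b) ^ a = G ^ a / b ^ a := Real.div_rpow hG.le hb.le a
  rw [e4, e5]
  have hba : (0:ℝ) < b ^ a := Real.rpow_pos_of_pos hb _
  have hGa' : (0:ℝ) < G ^ a := Real.rpow_pos_of_pos hG _
  field_simp

theorem stmt_10 {Ω : Type*} [MeasurableSpace Ω] (μ : Measure Ω) [IsProbabilityMeasure μ]
    (D α T lam b : ℝ) (hD : 0 < D) (hα : 2 < α) (hT : 0 < T) (hlam : 0 < lam) (hb : 0 < b)
    (m : ℕ) (hm : 1 ≤ m)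
    (g : Ω → ℝ) (hgm : Measurable g) (hgnn : ∀ ω, 0 ≤ g ω)
    (hgpos : ∀ᵐ ω ∂μ, 0 < g ω) (hgint : Integrable g μ) :
    ContDiffOn ℝ m
      (fun s : ℝ => 2 * Real.pi * lam * ∫ r in (0:ℝ)..D,
        r * ∫ ω, Real.exp (s * g ω * r ^ (-α) *
            (if T ≤ g ω * r ^ (-α) then (1:ℝ) else 0)) ∂μ)
      (Set.Iio 0) ∧
    iteratedDerivWithin m
      (fun s : ℝ => 2 * Real.pi * lam * ∫ r in (0:ℝ)..D,
        r * ∫ ω, Real.exp (s * g ω * r ^ (-α) *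
            (if T ≤ g ω * r ^ (-α) then (1:ℝ) else 0)) ∂μ)
      (Set.Iio 0) (-1 / b)
      = (2 / α) * lam * Real.pi * b ^ ((m : ℝ) - 2 / α) *
          ∫ ω, g ω ^ (2 / α) *
            uGamma ((m : ℝ) - 2 / α) ((g ω / b) * max (D ^ (-α)) (T / g ω)) ∂μ := by
  classical
  have hα0 : (0:ℝ) < α := by linarith
  set ν : Measure (ℝ × Ω) := (volume.restrict (Ioc (0:ℝ) D)).prod μ with hν
  haveI hfin1 : IsFiniteMeasure (volume.restrict (Ioc (0:ℝ) D)) :=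
    ⟨by rw [Measure.restrict_apply_univ]; exact measure_Ioc_lt_top⟩
  haveI : IsFiniteMeasure ν := by rw [hν]; infer_instance
  set C : ℝ × Ω → ℝ :=
    fun p => g p.2 * p.1 ^ (-α) * (if T ≤ g p.2 * p.1 ^ (-α) then (1:ℝ) else 0) with hC
  have hVmeas : Measurable (fun p : ℝ × Ω => g p.2 * p.1 ^ (-α)) :=
    (hgm.comp measurable_snd).mul (measurable_fst.pow measurable_const)
  have hCmeas : Measurable C := by
    apply hVmeas.mul
    exact Measurable.ite (measurableSet_le measurable_const hVmeas)
      measurable_const measurable_const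
  have hCnn : ∀ p : ℝ × Ω, 0 ≤ p.1 → 0 ≤ C p := by
    intro p hp
    apply mul_nonneg (mul_nonneg (hgnn _) (Real.rpow_nonneg hp _))
    split <;> norm_num
  have haeC : ∀ᵐ p ∂ν, p.1 ∈ Ioc (0:ℝ) D ∧ 0 ≤ C p := by
    have h0 : ν {p : ℝ × Ω | p.1 ∉ Ioc (0:ℝ) D} = 0 := by
      have hset : {p : ℝ × Ω | p.1 ∉ Ioc (0:ℝ) D}
          = (Ioc (0:ℝ) D)ᶜ ×ˢ (Set.univ : Set Ω) := by
        ext p; simp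
      rw [hset, hν, Measure.prod_prod,
        Measure.restrict_apply measurableSet_Ioc.compl,
        compl_inter_self, measure_empty, zero_mul]
    have h1 : ∀ᵐ p ∂ν, p.1 ∈ Ioc (0:ℝ) D := by
      rw [MeasureTheory.ae_iff]; exact h0
    exact h1.mono fun p hp => ⟨hp, hCnn p hp.1.le⟩
  -- the integrand family and its basic properties
  set Φ : ℕ → ℝ → ℝ :=
    fun n s => ∫ p, p.1 * C p ^ n * Real.exp (s * C p) ∂ν with hΦ
  have hFmeas : ∀ (n : ℕ) (s : ℝ),
      AEStronglyMeasurable (fun p : ℝ × Ω => p.1 * C p ^ n * Real.exp (s * C p)) ν :=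
    fun n s => ((measurable_fst.mul (hCmeas.pow_const n)).mul
      ((hCmeas.const_mul s).exp)).aestronglyMeasurable
  have hbound : ∀ (n : ℕ) (s δ : ℝ), 0 < δ → s ≤ -δ → ∀ p : ℝ × Ω,
      p.1 ∈ Ioc (0:ℝ) D → 0 ≤ C p →
      ‖p.1 * C p ^ n * Real.exp (s * C p)‖ ≤ D * (n.factorial / δ ^ n) := by
    intro n s δ hδ hs p hp hCp
    have hexp : Real.exp (s * C p) ≤ Real.exp (-(δ * C p)) := by
      apply Real.exp_le_exp.mpr
      nlinarith [mul_nonneg (by linarith : (0:ℝ) ≤ -δ - s) hCp]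
    rw [Real.norm_eq_abs, abs_of_nonneg
      (mul_nonneg (mul_nonneg hp.1.le (pow_nonneg hCp n)) (Real.exp_pos _).le)]
    calc p.1 * C p ^ n * Real.exp (s * C p)
        ≤ D * (C p ^ n * Real.exp (s * C p)) := by
          rw [mul_assoc]
          exact mul_le_mul_of_nonneg_right hp.2
            (mul_nonneg (pow_nonneg hCp n) (Real.exp_pos _).le)
      _ ≤ D * (C p ^ n * Real.exp (-(δ * C p))) :=
          mul_le_mul_of_nonneg_left
            (mul_le_mul_of_nonneg_left hexp (pow_nonneg hCp n)) hD.le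
      _ ≤ D * (n.factorial / δ ^ n) :=
          mul_le_mul_of_nonneg_left (pow_mul_exp_neg_le n hδ hCp) hD.le
  have hInt : ∀ (n : ℕ) (s : ℝ), s < 0 →
      Integrable (fun p : ℝ × Ω => p.1 * C p ^ n * Real.exp (s * C p)) ν := by
    intro n s hs
    refine Integrable.mono' (integrable_const (D * (n.factorial / (-s) ^ n)))
      (hFmeas n s) ?_
    filter_upwards [haeC] with p hp
    exact hbound n s (-s) (by linarith) (by linarith) p hp.1 hp.2
  have hderiv : ∀ (n : ℕ) (s₀ : ℝ), s₀ < 0 → HasDerivAt (Φ n) (Φ (n+1) s₀) s₀ := by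
    intro n s₀ hs₀
    have hε : 0 < -s₀/2 := by linarith
    refine (hasDerivAt_integral_of_dominated_loc_of_deriv_le (Metric.ball_mem_nhds s₀ hε)
      (F := fun s p => p.1 * C p ^ n * Real.exp (s * C p))
      (F' := fun s p => p.1 * C p ^ (n+1) * Real.exp (s * C p))
      (bound := fun _ => D * ((n+1).factorial / (-s₀/2) ^ (n+1)))
      (Filter.Eventually.of_forall fun s => hFmeas n s) (hInt n s₀ hs₀)
      (hFmeas (n+1) s₀) ?_ (integrable_const _) ?_).2
    · filter_upwards [haeC] with p hp
      intro s hs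
      have hs' : s ≤ -(-s₀/2) := by
        rw [Metric.mem_ball, Real.dist_eq, abs_lt] at hs
        linarith [hs.2]
      exact hbound (n+1) s (-s₀/2) hε hs' p hp.1 hp.2
    · filter_upwards with p
      intro s hs
      have h1 : HasDerivAt (fun s : ℝ => s * C p) (C p) s := hasDerivAt_mul_const (C p)
      have h3 := (h1.exp).const_mul (p.1 * C p ^ n)
      rw [show p.1 * C p ^ (n+1) * Real.exp (s * C p) = p.1 * C p ^ n * (Real.exp (s * C p) * C p) by ring]
      exact h3
  -- identification of the function with 2πλ Φ 0 on Iio 0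
  set Gfun : ℝ → ℝ := fun s : ℝ => 2 * Real.pi * lam * ∫ r in (0:ℝ)..D,
        r * ∫ ω, Real.exp (s * g ω * r ^ (-α) *
            (if T ≤ g ω * r ^ (-α) then (1:ℝ) else 0)) ∂μ with hGfun
  have hEq : Set.EqOn Gfun (fun s => 2 * Real.pi * lam * Φ 0 s) (Iio 0) := by
    intro s hs
    have hs' : s < 0 := hs
    have key : (∫ r in (0:ℝ)..D,
        r * ∫ ω, Real.exp (s * g ω * r ^ (-α) *
            (if T ≤ g ω * r ^ (-α) then (1:ℝ) else 0)) ∂μ) = Φ 0 s := by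
      have h0 : Integrable (fun p : ℝ × Ω => p.1 * Real.exp (s * C p)) ν := by
        have := hInt 0 s hs'
        simpa using this
      calc (∫ r in (0:ℝ)..D,
          r * ∫ ω, Real.exp (s * g ω * r ^ (-α) *
            (if T ≤ g ω * r ^ (-α) then (1:ℝ) else 0)) ∂μ)
          = ∫ r in Ioc (0:ℝ) D, ∫ ω, r * Real.exp (s * C (r, ω)) ∂μ := by
            rw [intervalIntegral.integral_of_le hD.le]
            apply setIntegral_congr_fun measurableSet_Ioc
            intro r hr
            dsimp only
            rw [← integral_const_mul]
            congr 1
            funext ω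
            congr 2
            simp only [hC]
            ring
        _ = ∫ p, p.1 * Real.exp (s * C p) ∂ν := by
            rw [hν]
            exact MeasureTheory.integral_integral
              (f := fun r ω => r * Real.exp (s * C (r, ω))) h0
        _ = Φ 0 s := by
            rw [hΦ]
            simp
    rw [hGfun]
    simp only [key]
  -- Φ is smooth; identify iterated derivatives
  have hIter : ∀ n : ℕ, Set.EqOn (iteratedDerivWithin n Gfun (Iio 0))
      (fun s => 2 * Real.pi * lam * Φ n s) (Iio 0) := by
    intro n
    induction n with
    | zero => simpa [iteratedDerivWithin_zero] using hEq
    | succ n ih =>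
      intro s hs
      have hUD : UniqueDiffWithinAt ℝ (Iio (0:ℝ)) s := isOpen_Iio.uniqueDiffWithinAt hs
      rw [iteratedDerivWithin_succ, derivWithin_congr ih (ih hs)]
      exact (((hderiv n s hs).const_mul (2 * Real.pi * lam)).hasDerivWithinAt.derivWithin hUD)
  have hCD : ContDiffOn ℝ m Gfun (Iio 0) := by
    apply contDiffOn_of_differentiableOn_deriv
    intro k _
    apply DifferentiableOn.congr (f := fun s => 2 * Real.pi * lam * Φ k s)
    · intro s hs
      exact (((hderiv k s hs).const_mul (2 * Real.pi * lam)).differentiableAt).differentiableWithinAt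
    · exact hIter k
  refine ⟨hCD, ?_⟩
  have hmem : (-1/b : ℝ) ∈ Iio (0:ℝ) :=
    mem_Iio.mpr (div_neg_of_neg_of_pos (by norm_num) hb)
  have hval := hIter m hmem
  rw [hval]
  beta_reduce
  have hswap : Φ m (-1/b) = ∫ ω, (∫ r in Ioc (0:ℝ) D,
      r * C (r, ω) ^ m * Real.exp ((-1/b) * C (r, ω))) ∂μ := by
    rw [hΦ, hν]
    exact MeasureTheory.integral_prod_symm _ (by rw [← hν]; exact hInt m _ (mem_Iio.mp hmem))
  rw [hswap]
  have hcong : ∀ᵐ ω ∂μ, (∫ r in Ioc (0:ℝ) D,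
      r * C (r, ω) ^ m * Real.exp ((-1/b) * C (r, ω)))
      = (1/α * b ^ ((m:ℝ) - 2/α)) * (g ω ^ ((2:ℝ)/α) *
          uGamma ((m:ℝ) - 2/α) ((g ω / b) * max (D ^ (-α)) (T / g ω))) := by
    filter_upwards [hgpos] with ω hω
    simpa only [hC] using inner_integral hD hα hT hb m hm hω
  rw [integral_congr_ae hcong, integral_const_mul]
  ring
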